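/- arXiv:1610.01635 — 2 statements merged into one kernel-verified Lean document; each statement's English description precedes it below -/
import Mathlib

section
/- For every integer n ≥ 1, the Vandermonde determinant Δ(x) = ∏_{1 ≤ i < j ≤ n} (x_i − x_j) satisfies ∑_{i=1}^n x_i ∂²Δ/∂x_i² = 0 identically on ℝ^n. -/
open Finset

noncomputable def pd {n : ℕ} (i : Fin n) (f : (Fin n → ℝ) → ℝ) (x : Fin n → ℝ) : ℝ :=
  deriv (fun t => f (Function.update x i t)) (x i)

noncomputable def vd {n : ℕ} (x : Fin n → ℝ) : ℝ :=
  ∏ i : Fin n, ∏ j ∈ Finset.Ioi i, (x i - x j)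

noncomputable def Cc {n : ℕ} (i : Fin n) (x : Fin n → ℝ) : ℝ :=
  (-1 : ℝ) ^ (i : ℕ) * ∏ a ∈ univ.erase i, ∏ b ∈ (Ioi a).erase i, (x a - x b)

lemma vd_factor {n : ℕ} (x : Fin n → ℝ) (i : Fin n) (t : ℝ) :
    vd (Function.update x i t) = Cc i x * ∏ j ∈ univ.erase i, (t - x j) := by
  classical
  set u := Function.update x i t with hu
  have hub : ∀ b : Fin n, b ≠ i → u b = x b := fun b hb => Function.update_of_ne hb _ _
  have hui : u i = t := by rw [hu]; exact Function.update_self _ _ _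
  unfold vd Cc
  rw [← Finset.mul_prod_erase univ _ (mem_univ i)]
  have h0 : ∏ b ∈ Ioi i, (u i - u b) = ∏ b ∈ Ioi i, (t - x b) := by
    refine prod_congr rfl fun b hb => ?_
    rw [hui, hub b (ne_of_gt (mem_Ioi.1 hb))]
  have h1 : ∀ a ∈ univ.erase i, ∏ b ∈ Ioi a, (u a - u b)
      = (if a < i then (x a - t) else 1) * ∏ b ∈ (Ioi a).erase i, (x a - x b) := by
    intro a ha
    have hai : a ≠ i := (mem_erase.1 ha).1
    have hxa : u a = x a := hub a hai
    by_cases h : a < i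
    · have hi : i ∈ Ioi a := mem_Ioi.2 h
      rw [← Finset.mul_prod_erase _ _ hi, if_pos h]
      congr 1
      · rw [hxa, hui]
      · refine prod_congr rfl fun b hb => ?_
        rw [hxa, hub b (mem_erase.1 hb).1]
    · have hi : i ∉ Ioi a := by simpa using h
      rw [Finset.erase_eq_of_notMem hi, if_neg h, one_mul]
      refine prod_congr rfl fun b hb => ?_
      rw [hxa, hub b (by rintro rfl; exact hi hb)]
  rw [h0, prod_congr rfl h1, prod_mul_distrib]
  have hIio : (univ.erase i).filter (fun a => a < i) = Iio i := by
    ext a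
    simp only [mem_filter, mem_erase, mem_univ, true_and, and_true, mem_Iio]
    exact ⟨fun h => h.2, fun h => ⟨ne_of_lt h, h⟩⟩
  have hIoi : (univ.erase i).filter (fun a => ¬ a < i) = Ioi i := by
    ext a
    simp only [mem_filter, mem_erase, mem_univ, true_and, and_true, mem_Ioi, not_lt]
    exact ⟨fun h => lt_of_le_of_ne h.2 (Ne.symm h.1), fun h => ⟨ne_of_gt h, le_of_lt h⟩⟩
  have h2 : ∏ a ∈ univ.erase i, (if a < i then (x a - t) else 1)
      = ∏ a ∈ Iio i, (x a - t) := by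
    rw [← Finset.prod_filter, hIio]
  have h3 : ∏ a ∈ Iio i, (x a - t) = (-1 : ℝ) ^ (i : ℕ) * ∏ a ∈ Iio i, (t - x a) := by
    have h : ∀ a ∈ Iio i, (x a - t) = (-1 : ℝ) * (t - x a) := by intro a _; ring
    rw [prod_congr rfl h, prod_mul_distrib, prod_const, Fin.card_Iio]
  have h4 : (∏ b ∈ Ioi i, (t - x b)) * ∏ a ∈ Iio i, (t - x a)
      = ∏ j ∈ univ.erase i, (t - x j) := by
    rw [mul_comm, ← Finset.prod_filter_mul_prod_filter_not (univ.erase i) (fun a => a < i),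
      hIio, hIoi]
  rw [h2, h3, ← h4]
  ring

noncomputable def P1 {n : ℕ} (x : Fin n → ℝ) (i : Fin n) (t : ℝ) : ℝ :=
  ∑ j ∈ univ.erase i, ∏ k ∈ (univ.erase i).erase j, (t - x k)

noncomputable def P2 {n : ℕ} (x : Fin n → ℝ) (i : Fin n) (t : ℝ) : ℝ :=
  ∑ j ∈ univ.erase i, ∑ k ∈ (univ.erase i).erase j,
    ∏ l ∈ ((univ.erase i).erase j).erase k, (t - x l)

lemma hasDerivAt_prod {n : ℕ} (x : Fin n → ℝ) (s : Finset (Fin n)) (t : ℝ) :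
    HasDerivAt (fun t => ∏ k ∈ s, (t - x k))
      (∑ k ∈ s, ∏ l ∈ s.erase k, (t - x l)) t := by
  have h := HasDerivAt.fun_finsetProd (u := s) (f := fun k s => s - x k)
    (f' := fun _ => (1 : ℝ)) (x := t) (fun k _ => (hasDerivAt_id t).sub_const (x k))
  simpa using h

lemma hasDerivAt_P1 {n : ℕ} (x : Fin n → ℝ) (i : Fin n) (t : ℝ) :
    HasDerivAt (P1 x i) (P2 x i t) t := by
  unfold P1 P2
  exact HasDerivAt.fun_sum (fun j _ => hasDerivAt_prod x _ t)

lemma pd_vd {n : ℕ} (x : Fin n → ℝ) (i : Fin n) :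
    pd i vd x = Cc i x * P1 x i (x i) := by
  have h0 : pd i vd x = deriv (fun t => vd (Function.update x i t)) (x i) := rfl
  have hfun : (fun t => vd (Function.update x i t))
      = fun t => Cc i x * ∏ j ∈ univ.erase i, (t - x j) := funext (vd_factor x i)
  rw [h0, hfun]
  exact (HasDerivAt.const_mul (Cc i x) (hasDerivAt_prod x _ (x i))).deriv

lemma Cc_update {n : ℕ} (x : Fin n → ℝ) (i : Fin n) (t : ℝ) :
    Cc i (Function.update x i t) = Cc i x := by
  unfold Cc
  congr 1
  refine prod_congr rfl fun a ha => prod_congr rfl fun b hb => ?_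
  rw [Function.update_of_ne (mem_erase.1 ha).1, Function.update_of_ne (mem_erase.1 hb).1]

lemma P1_update {n : ℕ} (x : Fin n → ℝ) (i : Fin n) (t s : ℝ) :
    P1 (Function.update x i t) i s = P1 x i s := by
  unfold P1
  refine sum_congr rfl fun j hj => prod_congr rfl fun k hk => ?_
  rw [Function.update_of_ne (mem_erase.1 (mem_erase.1 hk).2).1]

lemma pd_pd_vd {n : ℕ} (x : Fin n → ℝ) (i : Fin n) :
    pd i (pd i vd) x = Cc i x * P2 x i (x i) := by
  have h0 : pd i (pd i vd) x = deriv (fun t => pd i vd (Function.update x i t)) (x i) := rfl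
  have hfun : (fun t => pd i vd (Function.update x i t)) = fun t => Cc i x * P1 x i t := by
    funext t
    rw [pd_vd, Cc_update, Function.update_self, P1_update]
  rw [h0, hfun]
  exact (HasDerivAt.const_mul (Cc i x) (hasDerivAt_P1 x i (x i))).deriv

lemma vd_eq {n : ℕ} (x : Fin n → ℝ) (i : Fin n) :
    vd x = Cc i x * ∏ j ∈ univ.erase i, (x i - x j) := by
  conv_lhs => rw [← Function.update_eq_self i x]
  exact vd_factor x i (x i)

noncomputable def Texp {n : ℕ} (x : Fin n → ℝ) : ℝ :=
  ∑ i : Fin n, x i * (Cc i x * P2 x i (x i))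

lemma Texp_cont {n : ℕ} : Continuous (Texp (n := n)) := by
  unfold Texp Cc P2
  apply continuous_finset_sum
  intro i _
  apply Continuous.mul (continuous_apply i)
  apply Continuous.mul
  · apply Continuous.mul continuous_const
    apply continuous_finset_prod
    intro a _
    apply continuous_finset_prod
    intro b _
    exact (continuous_apply a).sub (continuous_apply b)
  · apply continuous_finset_sum
    intro j _
    apply continuous_finset_sum
    intro k _
    apply continuous_finset_prod
    intro l _
    exact (continuous_apply i).sub (continuous_apply l)

lemma sum_triple {n : ℕ} (f : Fin n → Fin n → Fin n → ℝ) :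
    ∑ i : Fin n, ∑ j ∈ univ.erase i, ∑ k ∈ (univ.erase i).erase j, f i j k
      = ∑ p ∈ (univ : Finset (Fin n × Fin n × Fin n)).filter
          (fun p => p.1 ≠ p.2.1 ∧ p.1 ≠ p.2.2 ∧ p.2.1 ≠ p.2.2), f p.1 p.2.1 p.2.2 := by
  rw [Finset.sum_filter, Fintype.sum_prod_type]
  refine sum_congr rfl fun i _ => ?_
  rw [Fintype.sum_prod_type,
    show univ.erase i = univ.filter (fun j => j ≠ i) from (Finset.filter_ne' univ i).symm,
    Finset.sum_filter]
  refine sum_congr rfl fun j _ => ?_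
  by_cases hji : j = i
  · subst hji
    rw [if_neg (by simp)]
    refine (Finset.sum_eq_zero fun k _ => ?_).symm
    rw [if_neg]
    tauto
  · rw [if_pos hji,
      show (univ.filter (fun j => j ≠ i)).erase j = univ.filter (fun k => k ≠ j ∧ k ≠ i) by
        ext a; simp only [mem_erase, mem_filter, mem_univ, true_and],
      Finset.sum_filter]
    refine sum_congr rfl fun k _ => ?_
    split_ifs with h1 h2 h2 <;> try rfl
    · exact absurd ⟨fun h => hji h.symm, fun h => h1.2 h.symm, fun h => h1.1 h.symm⟩ h2
    · exact absurd ⟨fun h => h2.2.2 h.symm, fun h => h2.2.1 h.symm⟩ h1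

lemma Texp_eq_zero_of_inj {n : ℕ} (x : Fin n → ℝ) (hx : ∀ i j : Fin n, i ≠ j → x i ≠ x j) :
    Texp x = 0 := by
  classical
  have hvd : ∀ (i : Fin n), ∀ j ∈ univ.erase i, ∀ k ∈ (univ.erase i).erase j,
      Cc i x * ∏ l ∈ ((univ.erase i).erase j).erase k, (x i - x l)
        = vd x / ((x i - x j) * (x i - x k)) := by
    intro i j hj k hk
    have hkE : k ∈ univ.erase i := (mem_erase.1 hk).2
    have d1 : x i - x j ≠ 0 := sub_ne_zero.2 (hx i j (fun h => (mem_erase.1 hj).1 h.symm))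
    have d2 : x i - x k ≠ 0 := sub_ne_zero.2 (hx i k (fun h => (mem_erase.1 hkE).1 h.symm))
    rw [eq_div_iff (mul_ne_zero d1 d2), vd_eq x i,
      ← Finset.mul_prod_erase _ _ hj, ← Finset.mul_prod_erase _ _ hk]
    ring
  have key : Texp x = vd x * ∑ i : Fin n, ∑ j ∈ univ.erase i, ∑ k ∈ (univ.erase i).erase j,
      x i / ((x i - x j) * (x i - x k)) := by
    unfold Texp P2
    simp only [Finset.mul_sum]
    refine sum_congr rfl fun i _ => sum_congr rfl fun j hj => sum_congr rfl fun k hk => ?_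
    rw [hvd i j hj k hk]
    ring
  rw [key]
  set D := (univ : Finset (Fin n × Fin n × Fin n)).filter
      (fun p => p.1 ≠ p.2.1 ∧ p.1 ≠ p.2.2 ∧ p.2.1 ≠ p.2.2) with hD
  set h : Fin n → Fin n → Fin n → ℝ := fun i j k => x i / ((x i - x j) * (x i - x k)) with hh
  have hU : ∑ i : Fin n, ∑ j ∈ univ.erase i, ∑ k ∈ (univ.erase i).erase j, h i j k
      = ∑ p ∈ D, h p.1 p.2.1 p.2.2 := sum_triple h
  have cyc1 : ∑ p ∈ D, h p.1 p.2.1 p.2.2 = ∑ p ∈ D, h p.2.1 p.2.2 p.1 := by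
    refine Finset.sum_nbij' (fun p => (p.2.2, p.1, p.2.1)) (fun p => (p.2.1, p.2.2, p.1))
      ?_ ?_ ?_ ?_ ?_ <;> intro p hp <;> simp only [hD, mem_filter, mem_univ, true_and] at * <;>
      tauto
  have cyc2 : ∑ p ∈ D, h p.1 p.2.1 p.2.2 = ∑ p ∈ D, h p.2.2 p.1 p.2.1 := by
    refine Finset.sum_nbij' (fun p => (p.2.1, p.2.2, p.1)) (fun p => (p.2.2, p.1, p.2.1))
      ?_ ?_ ?_ ?_ ?_ <;> intro p hp <;> simp only [hD, mem_filter, mem_univ, true_and] at * <;>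
      tauto
  have hsum3 : (∑ p ∈ D, h p.1 p.2.1 p.2.2) + (∑ p ∈ D, h p.2.1 p.2.2 p.1)
      + (∑ p ∈ D, h p.2.2 p.1 p.2.1) = 0 := by
    rw [← Finset.sum_add_distrib, ← Finset.sum_add_distrib]
    refine Finset.sum_eq_zero fun p hp => ?_
    simp only [hD, mem_filter, mem_univ, true_and] at hp
    obtain ⟨h12, h13, h23⟩ := hp
    have d12 : x p.1 - x p.2.1 ≠ 0 := sub_ne_zero.2 (hx _ _ h12)
    have d13 : x p.1 - x p.2.2 ≠ 0 := sub_ne_zero.2 (hx _ _ h13)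
    have d23 : x p.2.1 - x p.2.2 ≠ 0 := sub_ne_zero.2 (hx _ _ h23)
    have d21 : x p.2.1 - x p.1 ≠ 0 := sub_ne_zero.2 (hx _ _ (Ne.symm h12))
    have d31 : x p.2.2 - x p.1 ≠ 0 := sub_ne_zero.2 (hx _ _ (Ne.symm h13))
    have d32 : x p.2.2 - x p.2.1 ≠ 0 := sub_ne_zero.2 (hx _ _ (Ne.symm h23))
    simp only [hh]
    field_simp
    ring
  have hzero : ∑ p ∈ D, h p.1 p.2.1 p.2.2 = 0 := by
    rw [← cyc1, ← cyc2] at hsum3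
    linarith
  rw [hU, hzero, mul_zero]

lemma Texp_eq_zero {n : ℕ} (x : Fin n → ℝ) : Texp x = 0 := by
  classical
  set B : Set ℝ := Set.range
    (fun p : Fin n × Fin n => (x p.2 - x p.1) / (((p.1 : ℕ) : ℝ) - ((p.2 : ℕ) : ℝ))) with hB
  have hBc : B.Countable := (Set.finite_range _).countable
  have hdense : Dense Bᶜ := hBc.dense_compl ℝ
  set φ : ℝ → ℝ := fun t => Texp (fun i => x i + t * ((i : ℕ) : ℝ)) with hφ
  have hφc : Continuous φ := by
    apply Texp_cont.comp
    apply continuous_pi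
    intro i
    exact continuous_const.add (continuous_id.mul continuous_const)
  have hzero : Set.EqOn φ (fun _ => 0) Bᶜ := by
    intro t ht
    apply Texp_eq_zero_of_inj
    intro i j hij heq
    have hvne : ((i : ℕ) : ℝ) ≠ ((j : ℕ) : ℝ) := by
      exact_mod_cast fun h => hij (Fin.ext h)
    apply ht
    refine ⟨(i, j), ?_⟩
    have hd : ((i : ℕ) : ℝ) - ((j : ℕ) : ℝ) ≠ 0 := sub_ne_zero.2 hvne
    field_simp
    linarith [heq]
  have hφ0 : φ = fun _ => 0 := Continuous.ext_on hdense hφc continuous_const hzero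
  have : Texp x = φ 0 := by
    rw [hφ]
    congr 1
    funext i
    ring
  rw [this, hφ0]

theorem sum_weighted_second_pderiv_vandermonde_eq_zero (n : ℕ) (hn : 1 ≤ n)
    (x : Fin n → ℝ) :
    ∑ i : Fin n, x i * pd i (pd i vd) x = 0 := by
  have h : ∑ i : Fin n, x i * pd i (pd i vd) x = Texp x :=
    Finset.sum_congr rfl fun i _ => by rw [pd_pd_vd]
  rw [h, Texp_eq_zero]
end

section
/- Let n > p ≥ 1 be integers and define F(y) = Δ(y)^{-1} ∏_{i=1}^p y_i^{p−n} on the set of y ∈ (0,∞)^p with pairwise distinct coordinates. Then F is annihilated by the Laguerre eigenvalues generator: ∑_{i=1}^p [2 y_i ∂_i² F + 2(n − p + 1) ∂_i F + ∑_{j ≠ i} (4 y_i/(y_i − y_j)) ∂_i F] = 0. -/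
open Polynomial Finset

theorem univ_erase_eq {p : ℕ} (i : Fin p) :
    Finset.univ.erase i = Finset.Iio i ∪ Finset.Ioi i := by
  ext j
  simp only [Finset.mem_erase, Finset.mem_univ, and_true, Finset.mem_union, Finset.mem_Iio,
    Finset.mem_Ioi]
  exact ne_iff_lt_or_gt

theorem vd_update {p : ℕ} (y : Fin p → ℝ) (i : Fin p) :
    ∃ c : ℝ, ∀ t, vd (Function.update y i t) = c * ∏ j ∈ Finset.univ.erase i, (t - y j) := by
  refine ⟨(∏ _a ∈ Finset.Iio i, (-1 : ℝ)) *
      ∏ a ∈ Finset.univ.erase i, ∏ b ∈ (Finset.Ioi a).erase i, (y a - y b), fun t => ?_⟩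
  set u := Function.update y i t with hu
  have hui : u i = t := Function.update_self i t y
  have huj : ∀ j, j ≠ i → u j = y j := fun j hj => Function.update_of_ne hj t y
  have h1 : ∏ b ∈ Finset.Ioi i, (u i - u b) = ∏ b ∈ Finset.Ioi i, (t - y b) :=
    Finset.prod_congr rfl fun b hb => by rw [hui, huj b (Finset.mem_Ioi.mp hb).ne']
  have h2 : ∀ a ∈ Finset.univ.erase i, ∏ b ∈ Finset.Ioi a, (u a - u b) =
      (if i ∈ Finset.Ioi a then (y a - t) else 1) * ∏ b ∈ (Finset.Ioi a).erase i, (y a - y b) := by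
    intro a ha
    have hai : a ≠ i := Finset.ne_of_mem_erase ha
    by_cases hia : i ∈ Finset.Ioi a
    · rw [if_pos hia, ← Finset.mul_prod_erase _ _ hia]
      congr 1
      · rw [hui, huj a hai]
      · exact Finset.prod_congr rfl fun b hb => by
          rw [huj a hai, huj b (Finset.ne_of_mem_erase hb)]
    · rw [if_neg hia, one_mul, Finset.erase_eq_of_notMem hia]
      exact Finset.prod_congr rfl fun b hb => by
        rw [huj a hai, huj b (by rintro rfl; exact hia hb)]
  have h3 : ∏ a ∈ Finset.univ.erase i, (if i ∈ Finset.Ioi a then (y a - t) else 1) =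
      ∏ a ∈ Finset.Iio i, (y a - t) := by
    rw [← Finset.prod_filter]
    congr 1
    ext a
    simp only [Finset.mem_filter, Finset.mem_erase, Finset.mem_univ, and_true, Finset.mem_Ioi,
      Finset.mem_Iio]
    exact ⟨fun h => h.2, fun h => ⟨ne_of_lt h, h⟩⟩
  have h4 : ∏ a ∈ Finset.Iio i, (y a - t) =
      (∏ _a ∈ Finset.Iio i, (-1 : ℝ)) * ∏ a ∈ Finset.Iio i, (t - y a) := by
    rw [← Finset.prod_mul_distrib]
    exact Finset.prod_congr rfl fun a _ => by ring
  have h5 : ∏ j ∈ Finset.univ.erase i, (t - y j) =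
      (∏ a ∈ Finset.Iio i, (t - y a)) * ∏ b ∈ Finset.Ioi i, (t - y b) := by
    rw [univ_erase_eq, Finset.prod_union]
    simp only [Finset.disjoint_left, Finset.mem_Iio, Finset.mem_Ioi]
    exact fun a h1 h2 => absurd (h1.trans h2) (lt_irrefl a)
  rw [vd, ← Finset.mul_prod_erase _ _ (Finset.mem_univ i), h1,
    Finset.prod_congr rfl h2, Finset.prod_mul_distrib, h3, h4, h5]
  ring

theorem derivative_finset_prod {ι : Type*} [DecidableEq ι] (s : Finset ι) (f : ι → ℝ[X]) :
    derivative (∏ i ∈ s, f i) = ∑ i ∈ s, (∏ j ∈ s.erase i, f j) * derivative (f i) := by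
  induction s using Finset.induction_on with
  | empty => simp
  | @insert a s ha ih =>
    rw [Finset.prod_insert ha, derivative_mul, ih, Finset.sum_insert ha,
      Finset.erase_insert ha]
    rw [Finset.mul_sum]
    congr 1
    · ring
    · refine Finset.sum_congr rfl fun i hi => ?_
      rw [Finset.erase_insert_of_ne (by rintro rfl; exact ha hi), Finset.prod_insert
        (fun h => ha (Finset.erase_subset _ _ h))]
      ring

theorem prod_erase_eq {p : ℕ} (E : Finset (Fin p)) (y : Fin p → ℝ) (c : ℝ)
    (h : ∀ j ∈ E, c - y j ≠ 0) {j : Fin p} (hj : j ∈ E) :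
    ∏ k ∈ E.erase j, (c - y k) = (∏ k ∈ E, (c - y k)) * (c - y j)⁻¹ := by
  rw [eq_mul_inv_iff_mul_eq₀ (h j hj)]
  exact Finset.prod_erase_mul E _ hj

theorem eval_derivative_prod_linear {p : ℕ} (E : Finset (Fin p)) (y : Fin p → ℝ) (c : ℝ)
    (h : ∀ j ∈ E, c - y j ≠ 0) :
    eval c (derivative (∏ j ∈ E, (X - C (y j)))) =
      (∏ j ∈ E, (c - y j)) * ∑ j ∈ E, (c - y j)⁻¹ := by
  rw [derivative_finset_prod, eval_finset_sum, Finset.mul_sum]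
  refine Finset.sum_congr rfl fun j hj => ?_
  simp only [derivative_sub, derivative_X, derivative_C, sub_zero, eval_mul, eval_prod, eval_sub,
    eval_X, eval_C, eval_one, mul_one]
  exact prod_erase_eq E y c h hj

theorem eval_derivative2_prod_linear {p : ℕ} (E : Finset (Fin p)) (y : Fin p → ℝ) (c : ℝ)
    (h : ∀ j ∈ E, c - y j ≠ 0) :
    eval c (derivative (derivative (∏ j ∈ E, (X - C (y j))))) =
      (∏ j ∈ E, (c - y j)) *
        ((∑ j ∈ E, (c - y j)⁻¹) ^ 2 - ∑ j ∈ E, ((c - y j)⁻¹) ^ 2) := by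
  rw [derivative_finset_prod]
  rw [derivative_sum]
  have step : ∀ j ∈ E, eval c (derivative ((∏ k ∈ E.erase j, (X - C (y k))) *
      derivative (X - C (y j)))) =
      (∏ k ∈ E, (c - y k)) * ((c - y j)⁻¹ * ((∑ k ∈ E, (c - y k)⁻¹) - (c - y j)⁻¹)) := by
    intro j hj
    simp only [derivative_sub, derivative_X, derivative_C, sub_zero, mul_one]
    rw [eval_derivative_prod_linear (E.erase j) y c (fun k hk => h k (Finset.mem_of_mem_erase hk))]
    rw [prod_erase_eq E y c h hj, Finset.sum_erase_eq_sub hj]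
    ring
  rw [eval_finset_sum, Finset.sum_congr rfl step, ← Finset.mul_sum]
  congr 1
  simp only [mul_sub]
  rw [Finset.sum_sub_distrib, ← Finset.sum_mul]
  congr 1
  · ring
  · exact Finset.sum_congr rfl fun j _ => (sq _).symm

theorem cast_mul_pow_pred (k : ℕ) (x : ℝ) (hx : x ≠ 0) :
    (k : ℝ) * x ^ (k - 1) = (k : ℝ) * x ^ k / x := by
  cases k with
  | zero => simp
  | succ k => rw [Nat.add_sub_cancel, pow_succ]; field_simp

theorem pd_formulas (n p : ℕ) (hp : 1 ≤ p) (hnp : p < n)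
    (F : (Fin p → ℝ) → ℝ)
    (hF : F = fun y => (vd y)⁻¹ * ∏ i : Fin p, y i ^ ((p : ℤ) - n))
    (y : Fin p → ℝ) (hy0 : ∀ i, 0 < y i) (hy : ∀ i j, i ≠ j → y i ≠ y j) (i : Fin p) :
    pd i F y = -(F y) * (((n - p : ℕ) : ℝ) / y i + ∑ j ∈ Finset.univ.erase i, (y i - y j)⁻¹) ∧
    pd i (pd i F) y = F y *
      ((((n - p : ℕ) : ℝ) / y i + ∑ j ∈ Finset.univ.erase i, (y i - y j)⁻¹) ^ 2
        + ((n - p : ℕ) : ℝ) / (y i) ^ 2 + ∑ j ∈ Finset.univ.erase i, ((y i - y j)⁻¹) ^ 2) := by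
  set m : ℕ := n - p with hm
  have hm1 : 1 ≤ m := by omega
  set E : Finset (Fin p) := Finset.univ.erase i with hE
  set c : ℝ := y i with hcdef
  have hc : c ≠ 0 := ne_of_gt (hy0 i)
  have hsub : ∀ j ∈ E, c - y j ≠ 0 := fun j hj =>
    sub_ne_zero.mpr (hy i j fun h => (Finset.mem_erase.mp hj).1 h.symm)
  set q : ℝ[X] := X ^ m * ∏ j ∈ E, (X - C (y j)) with hq
  set S : ℝ := ∑ j ∈ E, (c - y j)⁻¹ with hS
  set T : ℝ := ∑ j ∈ E, ((c - y j)⁻¹) ^ 2 with hT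
  set P : ℝ := ∏ j ∈ E, (c - y j) with hP
  have hevalq : ∀ t : ℝ, eval t q = t ^ m * ∏ j ∈ E, (t - y j) := by
    intro t; simp [hq, eval_prod]
  obtain ⟨c0, hc0⟩ := vd_update y i
  have hzp : ∀ t : ℝ, t ^ ((p : ℤ) - n) = (t ^ m)⁻¹ := by
    intro t
    have he : (p : ℤ) - n = -(m : ℤ) := by
      rw [hm]; push_cast [Nat.cast_sub hnp.le]; ring
    rw [he, zpow_neg, zpow_natCast]
  set K : ℝ := c0⁻¹ * ∏ j ∈ E, (y j) ^ ((p : ℤ) - n) with hKdef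
  have hK : ∀ t : ℝ, F (Function.update y i t) = K * (eval t q)⁻¹ := by
    intro t
    rw [hF]
    simp only
    rw [hc0 t, ← Finset.mul_prod_erase _ _ (Finset.mem_univ i)]
    have h1 : Function.update y i t i = t := Function.update_self i t y
    have h2 : ∏ j ∈ E, Function.update y i t j ^ ((p : ℤ) - n) =
        ∏ j ∈ E, y j ^ ((p : ℤ) - n) :=
      Finset.prod_congr rfl fun j hj => by
        rw [Function.update_of_ne (Finset.mem_erase.mp hj).1]
    rw [h1, h2, hzp t, hevalq t, hKdef, mul_inv, mul_inv]
    ring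
  have hFy : F y = K * (eval c q)⁻¹ := by
    conv_lhs => rw [← Function.update_eq_self i y]
    exact hK (y i)
  have hQ0 : eval c q ≠ 0 := by
    rw [hevalq]
    exact mul_ne_zero (pow_ne_zero _ hc) (Finset.prod_ne_zero_iff.mpr hsub)
  have hPi : eval c (∏ j ∈ E, (X - C (y j))) = P := by
    rw [eval_prod, hP]
    exact Finset.prod_congr rfl fun j _ => by rw [eval_sub, eval_X, eval_C]
  have hevD : eval c (derivative (∏ j ∈ E, (X - C (y j)))) = P * S := by
    rw [eval_derivative_prod_linear E y c hsub, ← hP, ← hS]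
  have hevD2 : eval c (derivative (derivative (∏ j ∈ E, (X - C (y j))))) = P * (S ^ 2 - T) := by
    rw [eval_derivative2_prod_linear E y c hsub, ← hP, ← hS, ← hT]
  have e2 : c ^ (m - 1) = c ^ m / c := by
    obtain ⟨m', hm'⟩ : ∃ m', m = m' + 1 := ⟨m - 1, by omega⟩
    rw [hm', Nat.add_sub_cancel, pow_succ]
    field_simp
  have e3 : ((m - 1 : ℕ) : ℝ) = (m : ℝ) - 1 := by
    push_cast [Nat.cast_sub hm1]; ring
  have hdq1 : derivative q = C (m : ℝ) * X ^ (m - 1) * ∏ j ∈ E, (X - C (y j)) +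
      X ^ m * derivative (∏ j ∈ E, (X - C (y j))) := by
    rw [hq, derivative_mul, derivative_X_pow]
  have hQ1 : eval c (derivative q) = eval c q * ((m : ℝ) / c + S) := by
    rw [hdq1]
    simp only [eval_add, eval_mul, eval_C, eval_pow, eval_X]
    rw [hPi, hevD, hevalq c, ← hP, cast_mul_pow_pred m c hc]
    field_simp
  have hdd : derivative (derivative q) =
      C (m : ℝ) * (C ((m - 1 : ℕ) : ℝ) * X ^ (m - 1 - 1)) * ∏ j ∈ E, (X - C (y j)) +
        C (m : ℝ) * X ^ (m - 1) * derivative (∏ j ∈ E, (X - C (y j))) +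
        (C (m : ℝ) * X ^ (m - 1) * derivative (∏ j ∈ E, (X - C (y j))) +
          X ^ m * derivative (derivative (∏ j ∈ E, (X - C (y j))))) := by
    rw [hdq1]
    simp only [derivative_add, derivative_mul, derivative_C, derivative_X_pow, zero_mul,
      zero_add]
  have hQ2 : eval c (derivative (derivative q)) =
      eval c q * (((m : ℝ) / c + S) ^ 2 - (m : ℝ) / c ^ 2 - T) := by
    rw [hdd]
    simp only [eval_add, eval_mul, eval_C, eval_pow, eval_X]
    rw [hPi, hevD, hevD2, hevalq c, ← hP, e3]
    have e1 : ((m : ℝ) - 1) * c ^ (m - 1 - 1) = ((m : ℝ) - 1) * c ^ (m - 1) / c := by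
      rw [← e3]; exact cast_mul_pow_pred (m - 1) c hc
    rw [e1, e2]
    field_simp
    ring
  have hgeq : (fun t => F (Function.update y i t)) = fun t => K * (eval t q)⁻¹ := funext hK
  have hd1 : ∀ t : ℝ, eval t q ≠ 0 →
      HasDerivAt (fun t => K * (eval t q)⁻¹)
        (K * (-(eval t (derivative q)) / (eval t q) ^ 2)) t := fun t ht =>
    ((q.hasDerivAt t).inv ht).const_mul K
  have pd1 : pd i F y = -(F y) * ((m : ℝ) / c + S) := by
    show deriv (fun t => F (Function.update y i t)) (y i) = _
    rw [hgeq, ← hcdef, (hd1 c hQ0).deriv, hQ1, hFy]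
    field_simp
  refine ⟨pd1, ?_⟩
  have hpdF : (fun t => pd i F (Function.update y i t)) =
      deriv (fun t => F (Function.update y i t)) := by
    funext t
    simp only [pd, Function.update_idem, Function.update_self]
  have hev : deriv (fun t => F (Function.update y i t)) =ᶠ[nhds c]
      fun t => K * (-(eval t (derivative q)) * ((eval t q) ^ 2)⁻¹) := by
    filter_upwards [q.continuousAt.eventually_ne hQ0] with t ht
    rw [hgeq, (hd1 t ht).deriv, div_eq_mul_inv]
  have hA : HasDerivAt (fun t : ℝ => -(eval t (derivative q)))
      (-(eval c (derivative (derivative q)))) c := ((q.derivative).hasDerivAt c).neg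
  have hB : HasDerivAt (fun t : ℝ => ((eval t q) ^ 2)⁻¹)
      (-((2 : ℕ) * (eval c q) ^ (2 - 1) * eval c (derivative q)) / ((eval c q) ^ 2) ^ 2) c :=
    ((q.hasDerivAt c).pow 2).inv (pow_ne_zero 2 hQ0)
  have hC := (hA.mul hB).const_mul K
  have hder2 : deriv (fun t => K * (-(eval t (derivative q)) * ((eval t q) ^ 2)⁻¹)) c =
      K * (-(eval c (derivative (derivative q))) * ((eval c q) ^ 2)⁻¹ +
        -(eval c (derivative q)) *
          (-((2 : ℕ) * (eval c q) ^ (2 - 1) * eval c (derivative q)) / ((eval c q) ^ 2) ^ 2)) :=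
    hC.deriv
  show deriv (fun t => pd i F (Function.update y i t)) (y i) = _
  rw [hpdF, ← hcdef, hev.deriv_eq, hder2, hQ1, hQ2, hFy]
  norm_num
  field_simp
  ring

theorem sum_S_eq_zero (p : ℕ) (y : Fin p → ℝ) :
    ∑ i : Fin p, ∑ j ∈ Finset.univ.erase i, (y i - y j)⁻¹ = 0 := by
  classical
  set f : Fin p × Fin p → ℝ := fun z => if z.1 = z.2 then 0 else (y z.1 - y z.2)⁻¹ with hf
  have h1 : ∀ i : Fin p, ∑ j ∈ Finset.univ.erase i, (y i - y j)⁻¹ = ∑ j, f (i, j) := by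
    intro i
    rw [(Finset.sum_erase (f := fun j => f (i, j)) Finset.univ (show (fun j => f (i, j)) i = 0 by simp [hf])).symm]
    exact Finset.sum_congr rfl fun j hj => by
      simp only [hf]
      rw [if_neg fun h => (Finset.mem_erase.mp hj).1 h.symm]
  have h2 : ∑ i : Fin p, ∑ j ∈ Finset.univ.erase i, (y i - y j)⁻¹ = ∑ z, f z := by
    rw [Fintype.sum_prod_type]
    exact Finset.sum_congr rfl fun i _ => h1 i
  have h3 : ∀ z : Fin p × Fin p, f z.swap = -f z := by
    rintro ⟨a, b⟩
    by_cases h : a = b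
    · simp [hf, h]
    · simp only [hf, Prod.swap_prod_mk]
      rw [if_neg (fun h2 => h (h2.symm)), if_neg h, ← neg_sub, inv_neg]
  have h5 : ∑ z : Fin p × Fin p, f z.swap = ∑ z, f z :=
    Fintype.sum_equiv (Equiv.prodComm (Fin p) (Fin p)) _ f fun z => rfl
  have h4 : ∑ z : Fin p × Fin p, f z = -∑ z : Fin p × Fin p, f z := by
    conv_lhs => rw [← h5]
    rw [Finset.sum_congr rfl fun z _ => h3 z]
    exact Finset.sum_neg_distrib f
  rw [h2]
  linarith

theorem sum_B_eq_zero (p : ℕ) (y : Fin p → ℝ) (hy : ∀ i j, i ≠ j → y i ≠ y j) :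
    ∑ i : Fin p, y i * ((∑ j ∈ Finset.univ.erase i, (y i - y j)⁻¹) ^ 2
      - ∑ j ∈ Finset.univ.erase i, ((y i - y j)⁻¹) ^ 2) = 0 := by
  classical
  set g : Fin p × Fin p × Fin p → ℝ := fun z =>
    if z.1 = z.2.1 ∨ z.1 = z.2.2 ∨ z.2.1 = z.2.2 then 0
    else y z.1 * ((y z.1 - y z.2.1)⁻¹ * (y z.1 - y z.2.2)⁻¹) with hg
  have step1 : ∀ i : Fin p, y i * ((∑ j ∈ Finset.univ.erase i, (y i - y j)⁻¹) ^ 2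
      - ∑ j ∈ Finset.univ.erase i, ((y i - y j)⁻¹) ^ 2) = ∑ j, ∑ k, g (i, j, k) := by
    intro i
    have inner : ∀ j ∈ Finset.univ.erase i, ∑ k, g (i, j, k) =
        y i * ((y i - y j)⁻¹ * ((∑ l ∈ Finset.univ.erase i, (y i - y l)⁻¹) - (y i - y j)⁻¹)) := by
      intro j hj
      have hji : j ≠ i := (Finset.mem_erase.mp hj).1
      have e1 : ∑ k, g (i, j, k) = ∑ k ∈ Finset.univ.erase i, g (i, j, k) :=
        (Finset.sum_erase (f := fun k => g (i, j, k)) Finset.univ (show (fun k => g (i, j, k)) i = 0 by simp [hg])).symm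
      have e2 : ∑ k ∈ Finset.univ.erase i, g (i, j, k) =
          ∑ k ∈ (Finset.univ.erase i).erase j, g (i, j, k) :=
        (Finset.sum_erase (f := fun k => g (i, j, k)) _ (show (fun k => g (i, j, k)) j = 0 by simp [hg])).symm
      have hterm : ∀ k ∈ (Finset.univ.erase i).erase j, g (i, j, k) =
          y i * ((y i - y j)⁻¹ * (y i - y k)⁻¹) := by
        intro k hk
        have hkj : k ≠ j := (Finset.mem_erase.mp hk).1
        have hki : k ≠ i := (Finset.mem_erase.mp (Finset.mem_of_mem_erase hk)).1
        simp only [hg]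
        rw [if_neg]
        push_neg
        exact ⟨fun h => hji h.symm, fun h => hki h.symm, fun h => hkj h.symm⟩
      rw [e1, e2, Finset.sum_congr rfl hterm, ← Finset.mul_sum, ← Finset.mul_sum,
        Finset.sum_erase_eq_sub (Finset.mem_erase.mpr ⟨hji, Finset.mem_univ j⟩)]
    have outer : ∑ j, ∑ k, g (i, j, k) = ∑ j ∈ Finset.univ.erase i, ∑ k, g (i, j, k) :=
      (Finset.sum_erase (f := fun j => ∑ k, g (i, j, k)) Finset.univ (show ∑ k, g (i, i, k) = 0 by simp [hg])).symm
    rw [outer, Finset.sum_congr rfl inner, ← Finset.mul_sum]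
    congr 1
    simp only [mul_sub]
    rw [Finset.sum_sub_distrib, ← Finset.sum_mul]
    congr 1
    · exact pow_two _
    · exact Finset.sum_congr rfl fun j _ => pow_two _
  have step2 : ∑ i : Fin p, y i * ((∑ j ∈ Finset.univ.erase i, (y i - y j)⁻¹) ^ 2
      - ∑ j ∈ Finset.univ.erase i, ((y i - y j)⁻¹) ^ 2) = ∑ z, g z := by
    rw [Fintype.sum_prod_type]
    refine Finset.sum_congr rfl fun i _ => ?_
    rw [step1 i]
    exact (Fintype.sum_prod_type (fun z : Fin p × Fin p => g (i, z))).symm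
  set e : (Fin p × Fin p × Fin p) ≃ (Fin p × Fin p × Fin p) :=
    ⟨fun z => (z.2.1, z.2.2, z.1), fun z => (z.2.2, z.1, z.2.1), fun z => rfl, fun z => rfl⟩ with he
  have hcyc1 : ∑ z, g (e z) = ∑ z, g z := Fintype.sum_equiv e _ g fun z => rfl
  have hcyc2 : ∑ z, g (e (e z)) = ∑ z, g z := by
    have := Fintype.sum_equiv e (fun z => g (e (e z))) (fun z => g (e z)) fun z => rfl
    rw [this, hcyc1]
  have hpt : ∀ z : Fin p × Fin p × Fin p, g z + g (e z) + g (e (e z)) = 0 := by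
    rintro ⟨i, j, k⟩
    by_cases hc : i = j ∨ i = k ∨ j = k
    · rcases hc with rfl | rfl | rfl <;> simp [hg, he]
    · push_neg at hc
      obtain ⟨hij, hik, hjk⟩ := hc
      have d1 := sub_ne_zero.mpr (hy i j hij)
      have d2 := sub_ne_zero.mpr (hy i k hik)
      have d3 := sub_ne_zero.mpr (hy j k hjk)
      have d4 := sub_ne_zero.mpr (hy j i hij.symm)
      have d5 := sub_ne_zero.mpr (hy k i hik.symm)
      have d6 := sub_ne_zero.mpr (hy k j hjk.symm)
      simp only [hg, he, Equiv.coe_fn_mk]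
      rw [if_neg (by push_neg; exact ⟨hij, hik, hjk⟩),
        if_neg (by push_neg; exact ⟨hjk, hij.symm, hik.symm⟩),
        if_neg (by push_neg; exact ⟨hik.symm, hjk.symm, hij⟩)]
      field_simp
      ring
  have hsum3 : ∑ z, (g z + g (e z) + g (e (e z))) = 0 := by
    rw [Finset.sum_congr rfl fun z _ => hpt z]
    exact Finset.sum_const_zero
  rw [Finset.sum_add_distrib, Finset.sum_add_distrib, hcyc1, hcyc2] at hsum3
  rw [step2]
  linarith

theorem laguerre_link_kernel_harmonic (n p : ℕ) (hp : 1 ≤ p) (hnp : p < n)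
    (F : (Fin p → ℝ) → ℝ)
    (hF : F = fun y => (vd y)⁻¹ * ∏ i : Fin p, y i ^ ((p : ℤ) - n))
    (y : Fin p → ℝ) (hy0 : ∀ i, 0 < y i) (hy : ∀ i j, i ≠ j → y i ≠ y j) :
    ∑ i : Fin p, (2 * y i * pd i (pd i F) y + 2 * ((n : ℝ) - p + 1) * pd i F y
        + ∑ j ∈ Finset.univ.erase i, (4 * y i / (y i - y j)) * pd i F y) = 0 := by
  have hm : ((n - p : ℕ) : ℝ) = (n : ℝ) - p := by
    push_cast [Nat.cast_sub hnp.le]; ring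
  have key : ∀ i : Fin p,
      2 * y i * pd i (pd i F) y + 2 * ((n : ℝ) - p + 1) * pd i F y
        + ∑ j ∈ Finset.univ.erase i, (4 * y i / (y i - y j)) * pd i F y =
      (F y * (-2 * (((n - p : ℕ) : ℝ) + 1))) * (∑ j ∈ Finset.univ.erase i, (y i - y j)⁻¹)
        + (F y * (-2)) * (y i * ((∑ j ∈ Finset.univ.erase i, (y i - y j)⁻¹) ^ 2
            - ∑ j ∈ Finset.univ.erase i, ((y i - y j)⁻¹) ^ 2)) := by
    intro i
    obtain ⟨h1, h2⟩ := pd_formulas n p hp hnp F hF y hy0 hy i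
    have hcoeff : ∑ j ∈ Finset.univ.erase i, (4 * y i / (y i - y j)) * pd i F y =
        (4 * y i * ∑ j ∈ Finset.univ.erase i, (y i - y j)⁻¹) * pd i F y := by
      rw [← Finset.sum_mul]
      congr 1
      simp only [div_eq_mul_inv]
      rw [← Finset.mul_sum]
    rw [hcoeff, h1, h2, ← hm]
    have hc : y i ≠ 0 := ne_of_gt (hy0 i)
    field_simp
    ring
  rw [Finset.sum_congr rfl fun i _ => key i, Finset.sum_add_distrib, ← Finset.mul_sum,
    ← Finset.mul_sum, sum_S_eq_zero p y, sum_B_eq_zero p y hy, mul_zero, mul_zero, add_zero]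
end
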